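/- For n ≥ 2, the expected value of as(w) over uniformly random w ∈ S_n equals (4n+1)/6; equivalently, Σ_{w ∈ S_n} as(w) = n!·(4n+1)/6. -/

import Mathlib

/-- The list of values of a permutation of `Fin n` (0-indexed; relative order
is what matters). -/
def permList (n : ℕ) (w : Equiv.Perm (Fin n)) : List ℕ :=
  List.ofFn (fun i => (w i : ℕ))

/-- A list is alternating: `a > b < c > d < ⋯` (descents in even positions). -/
def IsAlt (l : List ℕ) : Prop :=
  ∀ i : ℕ, ∀ hi : i + 1 < l.length,
    if i % 2 = 0 then l.get ⟨i + 1, hi⟩ < l.get ⟨i, Nat.lt_of_succ_lt hi⟩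
    else l.get ⟨i, Nat.lt_of_succ_lt hi⟩ < l.get ⟨i + 1, hi⟩

/-- `asLen n w` : the maximum length of an alternating subsequence of `w`. -/
noncomputable def asLen (n : ℕ) (w : Equiv.Perm (Fin n)) : ℕ :=
  sSup {k | ∃ l : List ℕ, l.Sublist (permList n w) ∧ IsAlt l ∧ l.length = k}

/-- `aCount n k = #{w ∈ S_n : as(w) = k}`. -/
noncomputable def aCount (n k : ℕ) : ℕ :=
  Nat.card {w : Equiv.Perm (Fin n) // asLen n w = k}

/-- `bCount n k = #{w ∈ S_n : as(w) ≤ k}`. -/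
noncomputable def bCount (n k : ℕ) : ℕ :=
  Nat.card {w : Equiv.Perm (Fin n) // asLen n w ≤ k}

namespace AsMean

variable (n : ℕ)

/-- value at position `i` (junk `0` out of range). -/
def av (w : Equiv.Perm (Fin n)) (i : ℕ) : ℕ := if h : i < n then (w ⟨i, h⟩ : ℕ) else 0

/-- sign: `true` = descent at `j`. -/
def sg (w : Equiv.Perm (Fin n)) (j : ℕ) : Bool := decide (av n w (j+1) < av n w j)

/-- number of sign changes. -/
def chg (w : Equiv.Perm (Fin n)) : ℕ :=
  ((Finset.range (n-2)).filter (fun j => sg n w j ≠ sg n w (j+1))).card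

variable {n}

theorem av_inj (w : Equiv.Perm (Fin n)) {i j : ℕ} (hi : i < n) (hj : j < n)
    (h : av n w i = av n w j) : i = j := by
  simp only [av, dif_pos hi, dif_pos hj] at h
  have := w.injective (Fin.val_injective (by exact_mod_cast h))
  simpa [Fin.ext_iff] using this

theorem av_lt_of_not_lt (w : Equiv.Perm (Fin n)) {i j : ℕ} (hi : i < n) (hj : j < n)
    (hne : i ≠ j) (h : ¬ av n w j < av n w i) : av n w i < av n w j := by
  rcases lt_trichotomy (av n w i) (av n w j) with h' | h' | h'
  · exact h'
  · exact absurd (av_inj w hi hj h') hne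
  · exact absurd h' h

theorem permList_length (w : Equiv.Perm (Fin n)) : (permList n w).length = n := by
  simp [permList]

theorem permList_get (w : Equiv.Perm (Fin n)) (i : Fin (permList n w).length) :
    (permList n w).get i = av n w i := by
  have hi : (i : ℕ) < n := by simpa [permList_length] using i.2
  rw [List.get_eq_getElem]
  simp [permList, av, dif_pos hi]

/-- chain lemma: constant sign means monotone. -/
theorem av_lt_av_of_sg_true (w : Equiv.Perm (Fin n)) {p q : ℕ} (hpq : p < q) (hq : q < n)
    (hs : ∀ j, p ≤ j → j < q → sg n w j = true) : av n w q < av n w p := by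
  induction q with
  | zero => omega
  | succ q ih =>
    have hq' : q < n := by omega
    have hsq : sg n w q = true := hs q (by omega) (by omega)
    have h1 : av n w (q+1) < av n w q := by simpa [sg] using hsq
    rcases Nat.lt_or_ge p q with h | h
    · exact h1.trans (ih h hq' (fun j h1 h2 => hs j h1 (by omega)))
    · have : p = q := by omega
      subst this; exact h1

theorem av_lt_av_of_sg_false (w : Equiv.Perm (Fin n)) {p q : ℕ} (hpq : p < q) (hq : q < n)
    (hs : ∀ j, p ≤ j → j < q → sg n w j = false) : av n w p < av n w q := by
  induction q with
  | zero => omega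
  | succ q ih =>
    have hq' : q < n := by omega
    have hsq : sg n w q = false := hs q (by omega) (by omega)
    have h1 : av n w q < av n w (q+1) := by
      have : ¬ av n w (q+1) < av n w q := by simpa [sg] using hsq
      exact av_lt_of_not_lt w hq' hq (by omega) this
    rcases Nat.lt_or_ge p q with h | h
    · exact (ih h hq' (fun j h1 h2 => hs j h1 (by omega))).trans h1
    · have : p = q := by omega
      subst this; exact h1


section ChgIn
variable (s : ℕ → Bool)

def chgIn (i i' : ℕ) : ℕ := ((Finset.Ico i i').filter (fun j => s j ≠ s (j+1))).card

theorem chgIn_add {i i' i'' : ℕ} (h1 : i ≤ i') (h2 : i' ≤ i'') :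
    chgIn s i i'' = chgIn s i i' + chgIn s i' i'' := by
  unfold chgIn
  rw [← Finset.card_union_of_disjoint, ← Finset.filter_union, Finset.Ico_union_Ico_eq_Ico h1 h2]
  exact Finset.disjoint_filter_filter (Finset.Ico_disjoint_Ico_consecutive i i' i'')

theorem chgIn_mono {i i' j j' : ℕ} (h1 : j ≤ i) (h2 : i' ≤ j') :
    chgIn s i i' ≤ chgIn s j j' :=
  Finset.card_le_card (Finset.filter_subset_filter _ (Finset.Ico_subset_Ico h1 h2))

theorem one_le_chgIn {i i' : ℕ} (hlt : i < i') (hne : s i ≠ s i') : 1 ≤ chgIn s i i' := by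
  rw [Nat.one_le_iff_ne_zero, ← Nat.pos_iff_ne_zero, chgIn, Finset.card_pos]
  by_contra hemp
  rw [Finset.not_nonempty_iff_eq_empty, Finset.eq_empty_iff_forall_notMem] at hemp
  have key : ∀ m, i ≤ m → m ≤ i' → s m = s i := by
    intro m
    induction m with
    | zero =>
      intro h1 _
      have : i = 0 := Nat.le_zero.mp h1
      rw [this]
    | succ m ih =>
      intro h1 h2
      rcases Nat.lt_or_ge i (m+1) with h | h
      · have hm : s m = s i := ih (by omega) (by omega)
        have := hemp m
        simp only [Finset.mem_filter, Finset.mem_Ico, not_and, ne_eq, not_not] at this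
        have := this ⟨by omega, by omega⟩
        rw [← this, hm]
      · have : i = m+1 := by omega
        rw [this]
  exact hne ((key i' (by omega) le_rfl).symm)


end ChgIn

theorem chg_eq_chgIn (w : Equiv.Perm (Fin n)) : chg n w = chgIn (sg n w) 0 (n-2) := by
  unfold chg chgIn
  rw [Finset.range_eq_Ico]

theorem exists_sg_of_lt (w : Equiv.Perm (Fin n)) {i i' : ℕ} (hii : i < i') (hi' : i' < n)
    (h : av n w i' < av n w i) : ∃ j, i ≤ j ∧ j < i' ∧ sg n w j = true := by
  by_contra hcon
  push_neg at hcon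
  have hall : ∀ j, i ≤ j → j < i' → sg n w j = false := by
    intro j h1 h2
    have := hcon j h1 h2
    exact Bool.eq_false_iff.mpr (by simpa using this)
  exact absurd (av_lt_av_of_sg_false w hii hi' hall) (by omega)

theorem exists_sg_of_gt (w : Equiv.Perm (Fin n)) {i i' : ℕ} (hii : i < i') (hi' : i' < n)
    (h : av n w i < av n w i') : ∃ j, i ≤ j ∧ j < i' ∧ sg n w j = false := by
  by_contra hcon
  push_neg at hcon
  have hall : ∀ j, i ≤ j → j < i' → sg n w j = true := by
    intro j h1 h2
    have := hcon j h1 h2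
    exact (Bool.eq_false_or_eq_true _).resolve_right (by simpa using this)
  exact absurd (av_lt_av_of_sg_true w hii hi' hall) (by omega)


/-! ### Construction of an optimal alternating subsequence -/

open Classical in
variable (n) in
/-- next extremum position after `p`. -/
noncomputable def nxtP (w : Equiv.Perm (Fin n)) (p : ℕ) : ℕ :=
  if h : ∃ j, p < j ∧ (j = n - 1 ∨ sg n w j ≠ sg n w p) then Nat.find h else p + 1

theorem nxt_ex (w : Equiv.Perm (Fin n)) {p : ℕ} (hp : p < n - 1) :
    ∃ j, p < j ∧ (j = n - 1 ∨ sg n w j ≠ sg n w p) := ⟨n-1, hp, Or.inl rfl⟩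

open Classical in
theorem nxt_props (w : Equiv.Perm (Fin n)) {p : ℕ} (hp : p < n - 1) :
    p < nxtP n w p ∧ nxtP n w p ≤ n - 1 ∧
      (nxtP n w p = n - 1 ∨ sg n w (nxtP n w p) ≠ sg n w p) ∧
      ∀ j, p ≤ j → j < nxtP n w p → sg n w j = sg n w p := by
  rw [nxtP, dif_pos (nxt_ex w hp)]
  refine ⟨(Nat.find_spec (nxt_ex w hp)).1, Nat.find_min' _ ⟨hp, Or.inl rfl⟩,
    (Nat.find_spec (nxt_ex w hp)).2, ?_⟩
  intro j h1 h2
  rcases Nat.eq_or_lt_of_le h1 with h | h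
  · rw [← h]
  · have hmin := Nat.find_min (nxt_ex w hp) h2
    push_neg at hmin
    exact (hmin h).2

theorem nxt_gt (w : Equiv.Perm (Fin n)) {p : ℕ} (hp : p < n - 1) : p < nxtP n w p :=
  (nxt_props w hp).1

theorem nxt_le (w : Equiv.Perm (Fin n)) {p : ℕ} (hp : p < n - 1) : nxtP n w p ≤ n - 1 :=
  (nxt_props w hp).2.1

theorem nxt_spec (w : Equiv.Perm (Fin n)) {p : ℕ} (hp : p < n - 1) :
    nxtP n w p = n - 1 ∨ sg n w (nxtP n w p) ≠ sg n w p :=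
  (nxt_props w hp).2.2.1

theorem nxt_min (w : Equiv.Perm (Fin n)) {p : ℕ} (hp : p < n - 1) {j : ℕ}
    (h1 : p ≤ j) (h2 : j < nxtP n w p) : sg n w j = sg n w p :=
  (nxt_props w hp).2.2.2 j h1 h2

variable (n) in
/-- greedy chain of extremum positions starting at `p`. -/
noncomputable def chainP (w : Equiv.Perm (Fin n)) (p : ℕ) : List ℕ :=
  if h : p < n - 1 then p :: chainP w (nxtP n w p) else [p]
termination_by n - 1 - p
decreasing_by
  have h1 := nxt_gt w h
  have h2 := nxt_le w h
  omega

theorem chainP_head (w : Equiv.Perm (Fin n)) (p : ℕ) :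
    (chainP n w p).head? = some p := by
  rw [chainP]; split <;> rfl

theorem lemA (w : Equiv.Perm (Fin n)) {p : ℕ} (hp : p < n - 1) (hlt : nxtP n w p < n - 1) :
    chgIn (sg n w) p (n - 2) = 1 + chgIn (sg n w) (nxtP n w p) (n - 2) := by
  set p' := nxtP n w p with hp'
  have h1 : p < p' := nxt_gt w hp
  have hone : chgIn (sg n w) p p' = 1 := by
    have hset : (Finset.Ico p p').filter (fun j => sg n w j ≠ sg n w (j+1)) = {p' - 1} := by
      ext j
      simp only [Finset.mem_filter, Finset.mem_Ico, Finset.mem_singleton, ne_eq]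
      constructor
      · rintro ⟨⟨hj1, hj2⟩, hne⟩
        by_contra hne'
        have e1 : sg n w j = sg n w p := nxt_min w hp hj1 hj2
        have e2 : sg n w (j+1) = sg n w p := nxt_min w hp (by omega) (by omega)
        exact hne (e1.trans e2.symm)
      · rintro rfl
        have e1 : sg n w (p' - 1) = sg n w p := nxt_min w hp (by omega) (by omega)
        have e2 : sg n w p' ≠ sg n w p := (nxt_spec w hp).resolve_left (by omega)
        have e3 : p' - 1 + 1 = p' := by omega
        refine ⟨⟨by omega, by omega⟩, ?_⟩
        rw [e1, e3]
        exact fun hx => e2 hx.symm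
    have : chgIn (sg n w) p p' = 1 := by rw [chgIn, hset, Finset.card_singleton]
    exact this
  rw [chgIn_add (sg n w) h1.le (by omega), hone]

theorem lemB (w : Equiv.Perm (Fin n)) {p : ℕ} (hp : p < n - 1) (heq : nxtP n w p = n - 1) :
    chgIn (sg n w) p (n - 2) = 0 := by
  rw [chgIn, Finset.card_eq_zero, Finset.filter_eq_empty_iff]
  intro j hj
  rw [Finset.mem_Ico] at hj
  have e1 : sg n w j = sg n w p := nxt_min w hp hj.1 (by omega)
  have e2 : sg n w (j+1) = sg n w p := nxt_min w hp (by omega) (by omega)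
  rw [e1, e2]
  simp

theorem chainP_length (w : Equiv.Perm (Fin n)) :
    ∀ m p : ℕ, p < n - 1 → n - 1 - p ≤ m →
    (chainP n w p).length = 2 + chgIn (sg n w) p (n - 2) := by
  intro m
  induction m with
  | zero => intro p h1 h2; omega
  | succ m ih =>
    intro p hp hm
    rw [chainP, dif_pos hp]
    have h1 : p < nxtP n w p := nxt_gt w hp
    have h2 : nxtP n w p ≤ n - 1 := nxt_le w hp
    rcases eq_or_lt_of_le h2 with he | hlt
    · rw [chainP, dif_neg (by omega)]
      rw [lemB w hp he]
      simp
    · rw [List.length_cons, ih (nxtP n w p) hlt (by omega), lemA w hp hlt]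
      omega

theorem chainP_sublist_base (w : Equiv.Perm (Fin n)) {p q : ℕ} (hq : q ≤ p) (hp : p < n) :
    (av n w p :: (permList n w).drop (p + 1)).Sublist ((permList n w).drop q) := by
  have hplen : p < (permList n w).length := by rwa [permList_length]
  have hv : av n w p = (permList n w)[p] := by
    rw [← permList_get w ⟨p, hplen⟩, List.get_eq_getElem]
  rw [hv, ← List.drop_eq_getElem_cons hplen]
  exact List.drop_sublist_drop_left _ hq

theorem chainP_sublist (w : Equiv.Perm (Fin n)) (hn : n ≠ 0) :
    ∀ m p q : ℕ, q ≤ p → p ≤ n - 1 → n - 1 - p ≤ m →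
    ((chainP n w p).map (av n w)).Sublist ((permList n w).drop q) := by
  have hbase : ∀ p q : ℕ, q ≤ p → p ≤ n - 1 →
      ([av n w p]).Sublist ((permList n w).drop q) := by
    intro p q hq hple
    have hp : p < n := by omega
    exact ((List.nil_sublist _).cons₂ (av n w p)).trans (chainP_sublist_base w hq hp)
  intro m
  induction m with
  | zero =>
    intro p q hq hple hm
    rw [chainP, dif_neg (by omega)]
    simpa using hbase p q hq hple
  | succ m ih =>
    intro p q hq hple hm
    by_cases hp : p < n - 1
    · rw [chainP, dif_pos hp]
      have h1 : p < nxtP n w p := nxt_gt w hp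
      have h2 : nxtP n w p ≤ n - 1 := nxt_le w hp
      have IH := ih (nxtP n w p) (p+1) (by omega) h2 (by omega)
      rw [List.map_cons]
      have hp' : p < n := by omega
      exact (IH.cons₂ (av n w p)).trans (chainP_sublist_base w hq hp')
    · rw [chainP, dif_neg hp]
      simpa using hbase p q hq hple

/-- parity-parametrized alternation -/
def AltB (b : Bool) (l : List ℕ) : Prop :=
  ∀ i : ℕ, ∀ hi : i + 1 < l.length,
    if decide (i % 2 = 0) = b then l.get ⟨i + 1, hi⟩ < l.get ⟨i, Nat.lt_of_succ_lt hi⟩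
    else l.get ⟨i, Nat.lt_of_succ_lt hi⟩ < l.get ⟨i + 1, hi⟩

theorem isAlt_of_altB {l : List ℕ} (h : AltB true l) : IsAlt l := by
  intro i hi
  have := h i hi
  by_cases hp : i % 2 = 0 <;> simp [hp] at this ⊢ <;> exact this

theorem altB_cons {b : Bool} {x : ℕ} {l : List ℕ}
    (hhd : ∀ y ∈ l.head?, if b then y < x else x < y)
    (htl : AltB (!b) l) : AltB b (x :: l) := by
  intro i hi
  match i with
  | 0 =>
    have hl : 0 < l.length := by simpa using Nat.lt_of_succ_lt_succ hi
    have hy : l.head? = some (l.get ⟨0, hl⟩) := by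
      cases l with
      | nil => simp at hl
      | cons a t => rfl
    have := hhd (l.get ⟨0, hl⟩) (by rw [hy]; rfl)
    cases b <;> simpa using this
  | (j+1) =>
    have hj : j + 1 < l.length := by simpa using Nat.lt_of_succ_lt_succ hi
    have := htl j hj
    have hpar : (decide ((j+1) % 2 = 0) = b) ↔ (decide (j % 2 = 0) = !b) := by
      rcases Nat.mod_two_eq_zero_or_one j with h1 | h1 <;>
        have h2 : (j+1) % 2 = 1 - j % 2 := by omega
      all_goals rw [h1] at h2; rw [h1, h2]; cases b <;> simp
    by_cases hc : decide ((j+1) % 2 = 0) = b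
    · rw [if_pos hc]
      rw [if_pos (hpar.mp hc)] at this
      exact this
    · rw [if_neg hc]
      rw [if_neg (fun hx => hc (hpar.mpr hx))] at this
      exact this

theorem chainP_alt (w : Equiv.Perm (Fin n)) (hn : n ≠ 0) :
    ∀ m p : ℕ, p ≤ n - 1 → n - 1 - p ≤ m → ∀ b : Bool,
    (p < n - 1 → sg n w p = b) → AltB b ((chainP n w p).map (av n w)) := by
  intro m
  induction m with
  | zero =>
    intro p hple hm b _
    rw [chainP, dif_neg (by omega)]
    intro i hi
    simp at hi
  | succ m ih =>
    intro p hple hm b hb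
    by_cases hp : p < n - 1
    · rw [chainP, dif_pos hp, List.map_cons]
      have h1 : p < nxtP n w p := nxt_gt w hp
      have h2 : nxtP n w p ≤ n - 1 := nxt_le w hp
      apply altB_cons
      · intro y hy
        have hhd : ((chainP n w (nxtP n w p)).map (av n w)).head? = some (av n w (nxtP n w p)) := by
          rw [List.head?_map, chainP_head]
          rfl
        rw [hhd, Option.mem_some_iff] at hy
        subst hy
        have hcst : ∀ j, p ≤ j → j < nxtP n w p → sg n w j = sg n w p :=
          fun j ha hb' => nxt_min w hp ha hb'
        have hbp := hb hp
        cases b with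
        | true =>
          rw [if_pos rfl]
          exact av_lt_av_of_sg_true w h1 (by omega)
            (fun j ha hb' => by rw [hcst j ha hb', hbp])
        | false =>
          rw [if_neg (by decide : ¬ (false = true))]
          exact av_lt_av_of_sg_false w h1 (by omega)
            (fun j ha hb' => by rw [hcst j ha hb', hbp])
      · apply ih (nxtP n w p) h2 (by omega)
        intro hlt
        have hne : sg n w (nxtP n w p) ≠ sg n w p := (nxt_spec w hp).resolve_left (by omega)
        rw [hb hp] at hne
        cases b <;> simp_all
    · rw [chainP, dif_neg hp]
      intro i hi
      simp at hi

theorem len_le (w : Equiv.Perm (Fin n)) {l : List ℕ}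
    (hsub : l.Sublist (permList n w)) (halt : IsAlt l) :
    l.length ≤ 1 + chg n w + (if sg n w 0 then 1 else 0) := by
  rcases Nat.lt_or_ge l.length 2 with hk | hk
  · have : (0:ℕ) ≤ if sg n w 0 then 1 else 0 := Nat.zero_le _
    omega
  obtain ⟨f, hf⟩ := List.sublist_iff_exists_fin_orderEmbedding_get_eq.mp hsub
  have hkdef : l.length = l.length := rfl
  set ι : ℕ → ℕ := fun t => if h : t < l.length then ((f ⟨t, h⟩ : Fin (permList n w).length) : ℕ) else 0
    with hιdef
  have hιmono : ∀ {t t' : ℕ}, t < t' → t' < l.length → ι t < ι t' := by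
    intro t t' h1 h2
    simp only [hιdef, dif_pos (h1.trans h2), dif_pos h2]
    exact_mod_cast f.strictMono (by exact_mod_cast h1)
  have hιlt : ∀ t, t < l.length → ι t < n := by
    intro t ht
    simp only [hιdef, dif_pos ht]
    have := (f ⟨t, ht⟩).2
    simpa [permList_length] using this
  have hval : ∀ t (h : t < l.length), av n w (ι t) = l.get ⟨t, h⟩ := by
    intro t h
    simp only [hιdef, dif_pos h]
    rw [hf ⟨t, h⟩, permList_get]
  have H : ∀ t, t + 1 < l.length → ∃ j, ι t ≤ j ∧ j < ι (t+1) ∧ sg n w j = decide (t % 2 = 0) := by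
    intro t ht
    have hlt := hιmono (Nat.lt_succ_self t) ht
    have hlt' := hιlt (t+1) ht
    have hcomp := halt t (by omega)
    by_cases hpar : t % 2 = 0
    · rw [if_pos hpar] at hcomp
      rw [← hval t (by omega), ← hval (t+1) ht] at hcomp
      obtain ⟨j, h1, h2, h3⟩ := exists_sg_of_lt w hlt hlt' hcomp
      exact ⟨j, h1, h2, by simp [h3, hpar]⟩
    · rw [if_neg hpar] at hcomp
      rw [← hval t (by omega), ← hval (t+1) ht] at hcomp
      obtain ⟨j, h1, h2, h3⟩ := exists_sg_of_gt w hlt hlt' hcomp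
      exact ⟨j, h1, h2, by simp [h3, hpar]⟩
  set J : ℕ → ℕ := fun t => if h : t + 1 < l.length then (H t h).choose else 0 with hJdef
  have hJ1 : ∀ t (h : t + 1 < l.length), ι t ≤ J t := by
    intro t h; simp only [hJdef, dif_pos h]; exact (H t h).choose_spec.1
  have hJ2 : ∀ t (h : t + 1 < l.length), J t < ι (t+1) := by
    intro t h; simp only [hJdef, dif_pos h]; exact (H t h).choose_spec.2.1
  have hJ3 : ∀ t (h : t + 1 < l.length), sg n w (J t) = decide (t % 2 = 0) := by
    intro t h; simp only [hJdef, dif_pos h]; exact (H t h).choose_spec.2.2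
  have key : ∀ t, t + 1 < l.length → J 0 ≤ J t ∧ t ≤ chgIn (sg n w) (J 0) (J t) := by
    intro t
    induction t with
    | zero => intro _; exact ⟨le_rfl, Nat.zero_le _⟩
    | succ t ih =>
      intro ht
      have ht' : t + 1 < l.length := by omega
      obtain ⟨ih1, ih2⟩ := ih ht'
      have hJlt : J t < J (t+1) := lt_of_lt_of_le (hJ2 t ht') (hJ1 (t+1) ht)
      have hsgne : sg n w (J t) ≠ sg n w (J (t+1)) := by
        rw [hJ3 t ht', hJ3 (t+1) ht]
        rcases Nat.even_or_odd t with he | ho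
        · have h1 : t % 2 = 0 := Nat.even_iff.mp he
          have h2 : (t+1) % 2 = 1 := by omega
          simp [h1, h2]
        · have h1 : t % 2 = 1 := Nat.odd_iff.mp ho
          have h2 : (t+1) % 2 = 0 := by omega
          simp [h1, h2]
      constructor
      · omega
      · rw [chgIn_add (sg n w) ih1 hJlt.le]
        have := one_le_chgIn (sg n w) hJlt hsgne
        omega
  obtain ⟨hk1, hk2⟩ := key (l.length-2) (by omega)
  have hup : J (l.length-2) ≤ n - 2 := by
    have h1 := hJ2 (l.length-2) (by omega)
    have h2 : l.length - 2 + 1 = l.length - 1 := by omega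
    have h3 := hιlt (l.length-1) (by omega)
    rw [h2] at h1
    omega
  by_cases hs0 : sg n w 0 = true
  · have : chgIn (sg n w) (J 0) (J (l.length-2)) ≤ chg n w := by
      rw [chg_eq_chgIn]
      exact chgIn_mono (sg n w) (Nat.zero_le _) hup
    rw [if_pos hs0]
    omega
  · have hs0' : sg n w 0 = false := Bool.eq_false_iff.mpr hs0
    have hJ0true : sg n w (J 0) = true := by simpa using hJ3 0 (by omega)
    have hJ0pos : 0 < J 0 := by
      rcases Nat.eq_zero_or_pos (J 0) with h | h
      · rw [h] at hJ0true; rw [hJ0true] at hs0'; exact absurd hs0' (by simp)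
      · exact h
    have hone : 1 ≤ chgIn (sg n w) 0 (J 0) :=
      one_le_chgIn (sg n w) hJ0pos (by rw [hs0', hJ0true]; simp)
    have hsplit : chg n w = chgIn (sg n w) 0 (J 0) + chgIn (sg n w) (J 0) (n - 2) := by
      rw [chg_eq_chgIn]
      exact chgIn_add (sg n w) (Nat.zero_le _) (by omega)
    have hmono : chgIn (sg n w) (J 0) (J (l.length-2)) ≤ chgIn (sg n w) (J 0) (n-2) :=
      chgIn_mono (sg n w) le_rfl hup
    rw [if_neg hs0]
    omega

/-! ### Counting -/

open Finset

variable (n) in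
def cnt2 (p q : Fin n) : ℕ :=
  (univ.filter fun w : Equiv.Perm (Fin n) => w p < w q).card

variable (n) in
def cnt3 (p q r : Fin n) : ℕ :=
  (univ.filter fun w : Equiv.Perm (Fin n) => w p < w q ∧ w q < w r).card

theorem cnt2_perm (σ : Equiv.Perm (Fin n)) (p q : Fin n) :
    cnt2 n (σ p) (σ q) = cnt2 n p q := by
  unfold cnt2
  apply Finset.card_equiv (Equiv.mulRight σ)
  intro w
  simp [Equiv.Perm.mul_apply]

theorem cnt3_perm (σ : Equiv.Perm (Fin n)) (p q r : Fin n) :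
    cnt3 n (σ p) (σ q) (σ r) = cnt3 n p q r := by
  unfold cnt3
  apply Finset.card_equiv (Equiv.mulRight σ)
  intro w
  simp [Equiv.Perm.mul_apply]

theorem perm_lt_of_not_lt {w : Equiv.Perm (Fin n)} {p q : Fin n} (hpq : p ≠ q)
    (h : ¬ w p < w q) : w q < w p := by
  rcases lt_trichotomy (w p) (w q) with h' | h' | h'
  · exact absurd h' h
  · exact absurd (w.injective h') hpq
  · exact h'

theorem cnt2_total {p q : Fin n} (hpq : p ≠ q) :
    cnt2 n p q + cnt2 n q p = Nat.factorial n := by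
  classical
  have h := Finset.card_filter_add_card_filter_not
    (s := (univ : Finset (Equiv.Perm (Fin n)))) (p := fun w => w p < w q)
  rw [Finset.card_univ, Fintype.card_perm, Fintype.card_fin] at h
  rw [cnt2, cnt2, ← h]
  congr 1
  have heq : (filter (fun w : Equiv.Perm (Fin n) => w q < w p) univ)
      = filter (fun w : Equiv.Perm (Fin n) => ¬ w p < w q) univ := by
    apply Finset.filter_congr
    intro w _
    exact ⟨fun h' => asymm h', fun h' => perm_lt_of_not_lt hpq h'⟩
  rw [heq]

theorem cnt3_rqp {p q r : Fin n} (hpq : p ≠ q) (hpr : p ≠ r) (hqr : q ≠ r) :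
    cnt3 n r q p = cnt3 n p q r := by
  have h := cnt3_perm (Equiv.swap p r) p q r
  rwa [Equiv.swap_apply_left, Equiv.swap_apply_of_ne_of_ne hpq.symm hqr,
    Equiv.swap_apply_right] at h

theorem cnt3_prq {p q r : Fin n} (hpq : p ≠ q) (hpr : p ≠ r) (hqr : q ≠ r) :
    cnt3 n p r q = cnt3 n p q r := by
  have h := cnt3_perm (Equiv.swap q r) p q r
  rwa [Equiv.swap_apply_of_ne_of_ne hpq hpr, Equiv.swap_apply_left,
    Equiv.swap_apply_right] at h

theorem cnt3_rpq {p q r : Fin n} (hpq : p ≠ q) (hpr : p ≠ r) (hqr : q ≠ r) :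
    cnt3 n r p q = cnt3 n p q r := by
  set c := (Equiv.swap p r).trans (Equiv.swap p q) with hc
  have cp : c p = r := by
    rw [hc, Equiv.trans_apply, Equiv.swap_apply_left,
      Equiv.swap_apply_of_ne_of_ne hpr.symm hqr.symm]
  have cq : c q = p := by
    rw [hc, Equiv.trans_apply, Equiv.swap_apply_of_ne_of_ne hpq.symm hqr,
      Equiv.swap_apply_right]
  have cr : c r = q := by
    rw [hc, Equiv.trans_apply, Equiv.swap_apply_right, Equiv.swap_apply_left]
  have h := cnt3_perm c p q r
  rw [cp, cq, cr] at h
  exact h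

theorem cnt2_split {p q r : Fin n} (hpq : p ≠ q) (hpr : p ≠ r) (hqr : q ≠ r) :
    cnt2 n p q = cnt3 n p q r + cnt3 n p r q + cnt3 n r p q := by
  classical
  have h1 := Finset.card_filter_add_card_filter_not
    (s := (univ : Finset (Equiv.Perm (Fin n))).filter fun w => w p < w q)
    (p := fun w => w q < w r)
  rw [Finset.filter_filter, Finset.filter_filter] at h1
  have e1 : ((univ : Finset (Equiv.Perm (Fin n))).filter fun w => w p < w q ∧ w q < w r)
      = (univ.filter fun w : Equiv.Perm (Fin n) => w p < w q ∧ w q < w r) := rfl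
  have e2 : ((univ : Finset (Equiv.Perm (Fin n))).filter fun w => w p < w q ∧ ¬ w q < w r)
      = (univ.filter fun w : Equiv.Perm (Fin n) => w p < w q ∧ w r < w q) := by
    apply Finset.filter_congr
    intro w _
    exact ⟨fun ⟨h, h'⟩ => ⟨h, perm_lt_of_not_lt hqr h'⟩, fun ⟨h, h'⟩ => ⟨h, asymm h'⟩⟩
  rw [e2] at h1
  have h2 := Finset.card_filter_add_card_filter_not
    (s := (univ : Finset (Equiv.Perm (Fin n))).filter fun w => w p < w q ∧ w r < w q)
    (p := fun w => w p < w r)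
  rw [Finset.filter_filter, Finset.filter_filter] at h2
  have e3 : ((univ : Finset (Equiv.Perm (Fin n))).filter fun w => (w p < w q ∧ w r < w q) ∧ w p < w r)
      = (univ.filter fun w : Equiv.Perm (Fin n) => w p < w r ∧ w r < w q) := by
    apply Finset.filter_congr
    intro w _
    exact ⟨fun ⟨⟨_, h2'⟩, h3⟩ => ⟨h3, h2'⟩, fun ⟨h3, h2'⟩ => ⟨⟨h3.trans h2', h2'⟩, h3⟩⟩
  have e4 : ((univ : Finset (Equiv.Perm (Fin n))).filter fun w => (w p < w q ∧ w r < w q) ∧ ¬ w p < w r)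
      = (univ.filter fun w : Equiv.Perm (Fin n) => w r < w p ∧ w p < w q) := by
    apply Finset.filter_congr
    intro w _
    constructor
    · rintro ⟨⟨h1', _⟩, h3⟩
      exact ⟨perm_lt_of_not_lt hpr h3, h1'⟩
    · rintro ⟨h3, h1'⟩
      exact ⟨⟨h1', h3.trans h1'⟩, asymm h3⟩
  rw [e3, e4] at h2
  unfold cnt2 cnt3
  omega

theorem six_mul_cnt3 (hn : 2 ≤ n) {p q r : Fin n} (hpq : p ≠ q) (hpr : p ≠ r) (hqr : q ≠ r) :
    6 * cnt3 n p q r = Nat.factorial n := by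
  have h1 := cnt2_split hpq hpr hqr
  rw [cnt3_prq hpq hpr hqr, cnt3_rpq hpq hpr hqr] at h1
  have h2 : cnt2 n q p = cnt2 n p q := by
    have h := cnt2_perm (Equiv.swap p q) q p
    rw [Equiv.swap_apply_right, Equiv.swap_apply_left] at h
    exact h.symm
  have h3 := cnt2_total hpq
  omega

theorem two_mul_cnt2 {p q : Fin n} (hpq : p ≠ q) :
    2 * cnt2 n p q = Nat.factorial n := by
  have h2 : cnt2 n q p = cnt2 n p q := by
    have h := cnt2_perm (Equiv.swap p q) q p
    rw [Equiv.swap_apply_right, Equiv.swap_apply_left] at h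
    exact h.symm
  have h3 := cnt2_total hpq
  omega

theorem exists_optimal (w : Equiv.Perm (Fin n)) (hn : 2 ≤ n) :
    ∃ l : List ℕ, l.Sublist (permList n w) ∧ IsAlt l ∧
      l.length = 1 + chg n w + (if sg n w 0 then 1 else 0) := by
  have hn0 : n ≠ 0 := by omega
  have hn1 : 0 < n - 1 := by omega
  by_cases hs0 : sg n w 0 = true
  · refine ⟨(chainP n w 0).map (av n w), ?_, ?_, ?_⟩
    · have := chainP_sublist w hn0 (n-1) 0 0 le_rfl (by omega) (by omega)
      rwa [List.drop_zero] at this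
    · exact isAlt_of_altB (chainP_alt w hn0 (n-1) 0 (by omega) (by omega) true (fun _ => hs0))
    · rw [List.length_map, chainP_length w (n-1) 0 hn1 (by omega), chg_eq_chgIn, if_pos hs0]
      omega
  · have hs0' : sg n w 0 = false := Bool.eq_false_iff.mpr hs0
    have h1 : 0 < nxtP n w 0 := nxt_gt w hn1
    have h2 : nxtP n w 0 ≤ n - 1 := nxt_le w hn1
    refine ⟨(chainP n w (nxtP n w 0)).map (av n w), ?_, ?_, ?_⟩
    · have := chainP_sublist w hn0 (n-1) (nxtP n w 0) 0 (by omega) h2 (by omega)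
      rwa [List.drop_zero] at this
    · refine isAlt_of_altB (chainP_alt w hn0 (n-1) (nxtP n w 0) h2 (by omega) true ?_)
      intro hlt
      have hne : sg n w (nxtP n w 0) ≠ sg n w 0 := (nxt_spec w hn1).resolve_left (by omega)
      rw [hs0'] at hne
      exact (Bool.eq_false_or_eq_true _).resolve_right hne
    · rw [List.length_map, if_neg hs0]
      rcases eq_or_lt_of_le h2 with he | hlt
      · rw [chainP, dif_neg (by omega), chg_eq_chgIn, lemB w hn1 he]
        rfl
      · rw [chainP_length w (n-1) (nxtP n w 0) hlt (by omega), chg_eq_chgIn, lemA w hn1 hlt]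
        omega

theorem asLen_eq (w : Equiv.Perm (Fin n)) (hn : 2 ≤ n) :
    asLen n w = 1 + chg n w + (if sg n w 0 then 1 else 0) := by
  obtain ⟨L, hsub, halt, hlen⟩ := exists_optimal w hn
  set k₀ := 1 + chg n w + (if sg n w 0 then 1 else 0) with hk₀
  have hmem : k₀ ∈ {k | ∃ l : List ℕ, l.Sublist (permList n w) ∧ IsAlt l ∧ l.length = k} :=
    ⟨L, hsub, halt, hlen⟩
  have hub : ∀ k ∈ {k | ∃ l : List ℕ, l.Sublist (permList n w) ∧ IsAlt l ∧ l.length = k},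
      k ≤ k₀ := by
    rintro k ⟨l, hsub', halt', rfl⟩
    exact len_le w hsub' halt'
  exact le_antisymm (csSup_le ⟨k₀, hmem⟩ hub) (le_csSup ⟨k₀, hub⟩ hmem)

theorem sg_eq_iff (w : Equiv.Perm (Fin n)) {j : ℕ} (hj : j + 2 < n) :
    (sg n w j = sg n w (j+1)) ↔
      (((w ⟨j, by omega⟩ : ℕ) < (w ⟨j+1, by omega⟩ : ℕ) ∧
        (w ⟨j+1, by omega⟩ : ℕ) < (w ⟨j+2, by omega⟩ : ℕ)) ∨
       ((w ⟨j+2, by omega⟩ : ℕ) < (w ⟨j+1, by omega⟩ : ℕ) ∧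
        (w ⟨j+1, by omega⟩ : ℕ) < (w ⟨j, by omega⟩ : ℕ))) := by
  have e1 : av n w j = (w ⟨j, by omega⟩ : ℕ) := by rw [av, dif_pos]
  have e2 : av n w (j+1) = (w ⟨j+1, by omega⟩ : ℕ) := by rw [av, dif_pos]
  have e3 : av n w (j+2) = (w ⟨j+2, by omega⟩ : ℕ) := by rw [av, dif_pos]
  have hne1 : (w ⟨j, by omega⟩ : ℕ) ≠ (w ⟨j+1, by omega⟩ : ℕ) := by
    intro h
    have := w.injective (Fin.val_injective h)
    simp [Fin.ext_iff] at this
  have hne2 : (w ⟨j+1, by omega⟩ : ℕ) ≠ (w ⟨j+2, by omega⟩ : ℕ) := by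
    intro h
    have := w.injective (Fin.val_injective h)
    simp [Fin.ext_iff] at this
  rw [sg, sg, e1, e2, e3, decide_eq_decide]
  constructor
  · intro h
    by_cases hc : (w ⟨j+1, by omega⟩ : ℕ) < (w ⟨j, by omega⟩ : ℕ)
    · exact Or.inr ⟨h.mp hc, hc⟩
    · refine Or.inl ⟨lt_of_le_of_ne (not_lt.mp hc) hne1, ?_⟩
      have h2 : ¬ (w ⟨j+2, by omega⟩ : ℕ) < (w ⟨j+1, by omega⟩ : ℕ) := fun hr => hc (h.mpr hr)
      exact lt_of_le_of_ne (not_lt.mp h2) hne2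
  · rintro (⟨h1, h2⟩ | ⟨h1, h2⟩)
    · exact iff_of_false (asymm h1) (asymm h2)
    · exact iff_of_true h2 h1

theorem six_mul_change (hn : 2 ≤ n) {j : ℕ} (hj : j + 2 < n) :
    6 * ((univ : Finset (Equiv.Perm (Fin n))).filter
        fun w => sg n w j ≠ sg n w (j+1)).card = 4 * Nat.factorial n := by
  classical
  set p : Fin n := ⟨j, by omega⟩
  set q : Fin n := ⟨j+1, by omega⟩
  set r : Fin n := ⟨j+2, by omega⟩
  have hpq : p ≠ q := by simp only [p, q, ne_eq, Fin.mk.injEq]; omega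
  have hpr : p ≠ r := by simp only [p, r, ne_eq, Fin.mk.injEq]; omega
  have hqr : q ≠ r := by simp only [q, r, ne_eq, Fin.mk.injEq]; omega
  have hsplit := Finset.card_filter_add_card_filter_not
    (s := (univ : Finset (Equiv.Perm (Fin n)))) (p := fun w => sg n w j = sg n w (j+1))
  rw [Finset.card_univ, Fintype.card_perm, Fintype.card_fin] at hsplit
  have hnochg : ((univ : Finset (Equiv.Perm (Fin n))).filter
      (fun w => sg n w j = sg n w (j+1))).card = cnt3 n p q r + cnt3 n r q p := by
    have heq : ((univ : Finset (Equiv.Perm (Fin n))).filter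
        (fun w => sg n w j = sg n w (j+1)))
        = ((univ.filter fun w : Equiv.Perm (Fin n) => (w p < w q ∧ w q < w r) ∨
            (w r < w q ∧ w q < w p))) := by
      apply Finset.filter_congr
      intro w _
      rw [sg_eq_iff w hj]
      simp only [Fin.lt_def]
      exact Iff.rfl
    rw [heq, Finset.filter_or, Finset.card_union_of_disjoint]
    · rfl
    · rw [Finset.disjoint_left]
      rintro w hw1 hw2
      rw [Finset.mem_filter] at hw1 hw2
      exact absurd hw1.2.2 (asymm hw2.2.1)
  have hneg : ((univ : Finset (Equiv.Perm (Fin n))).filter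
      (fun w => ¬ sg n w j = sg n w (j+1))).card
      = ((univ : Finset (Equiv.Perm (Fin n))).filter
        (fun w => sg n w j ≠ sg n w (j+1))).card := rfl
  have h6 := six_mul_cnt3 hn hpq hpr hqr
  have hrqp := cnt3_rqp hpq hpr hqr
  omega

theorem sum_asLen (hn : 2 ≤ n) :
    6 * ∑ w : Equiv.Perm (Fin n), asLen n w = Nat.factorial n * (4 * n + 1) := by
  classical
  obtain ⟨m, rfl⟩ : ∃ m, n = m + 2 := ⟨n - 2, by omega⟩
  have hchar : ∑ w : Equiv.Perm (Fin (m+2)), asLen (m+2) w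
      = ∑ w : Equiv.Perm (Fin (m+2)),
          (1 + chg (m+2) w + (if sg (m+2) w 0 then 1 else 0)) :=
    Finset.sum_congr rfl (fun w _ => asLen_eq w hn)
  rw [hchar, Finset.sum_add_distrib, Finset.sum_add_distrib]
  set N := Nat.factorial (m+2) with hN
  have h1 : ∑ _w : Equiv.Perm (Fin (m+2)), 1 = N := by
    rw [Finset.sum_const, Finset.card_univ, Fintype.card_perm, Fintype.card_fin, smul_eq_mul,
      mul_one]
  have hite : ∑ w : Equiv.Perm (Fin (m+2)), (if sg (m+2) w 0 then 1 else 0)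
      = ((univ : Finset (Equiv.Perm (Fin (m+2)))).filter fun w => sg (m+2) w 0 = true).card :=
    (Finset.card_filter _ _).symm
  have hdesc : 2 * ((univ : Finset (Equiv.Perm (Fin (m+2)))).filter
      fun w => sg (m+2) w 0 = true).card = N := by
    have heq : ((univ : Finset (Equiv.Perm (Fin (m+2)))).filter fun w => sg (m+2) w 0 = true)
        = (univ.filter fun w : Equiv.Perm (Fin (m+2)) =>
            w (⟨1, by omega⟩ : Fin (m+2)) < w (⟨0, by omega⟩ : Fin (m+2))) := by
      apply Finset.filter_congr
      intro w _
      rw [sg, decide_eq_true_iff, av, av, dif_pos (by omega : (1:ℕ) < m+2),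
        dif_pos (by omega : (0:ℕ) < m+2)]
      simp only [Fin.lt_def]
    rw [heq]
    exact two_mul_cnt2 (by simp only [ne_eq, Fin.mk.injEq]; omega)
  have hchg : ∑ w : Equiv.Perm (Fin (m+2)), chg (m+2) w
      = ∑ j ∈ Finset.range m, ((univ : Finset (Equiv.Perm (Fin (m+2)))).filter
          fun w => sg (m+2) w j ≠ sg (m+2) w (j+1)).card := by
    have hm2 : m + 2 - 2 = m := by omega
    have : ∀ w : Equiv.Perm (Fin (m+2)), chg (m+2) w
        = ∑ j ∈ Finset.range m, (if sg (m+2) w j ≠ sg (m+2) w (j+1) then 1 else 0) := by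
      intro w
      rw [chg, hm2, Finset.card_filter]
    rw [Finset.sum_congr rfl (fun w _ => this w), Finset.sum_comm]
    exact Finset.sum_congr rfl (fun j _ => (Finset.card_filter _ _).symm)
  have hchg6 : ∀ j ∈ Finset.range m,
      6 * ((univ : Finset (Equiv.Perm (Fin (m+2)))).filter
        fun w => sg (m+2) w j ≠ sg (m+2) w (j+1)).card = 4 * N := by
    intro j hj
    rw [Finset.mem_range] at hj
    exact six_mul_change hn (by omega)
  have hsum6 : 6 * ∑ j ∈ Finset.range m, ((univ : Finset (Equiv.Perm (Fin (m+2)))).filter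
      fun w => sg (m+2) w j ≠ sg (m+2) w (j+1)).card = 4 * N * m := by
    rw [Finset.mul_sum, Finset.sum_congr rfl hchg6, Finset.sum_const, Finset.card_range,
      smul_eq_mul]
    ring
  rw [h1, hite, hchg]
  set C := ∑ j ∈ Finset.range m, ((univ : Finset (Equiv.Perm (Fin (m+2)))).filter
      fun w => sg (m+2) w j ≠ sg (m+2) w (j+1)).card
  set D := ((univ : Finset (Equiv.Perm (Fin (m+2)))).filter
      fun w => sg (m+2) w 0 = true).card
  have : (4:ℕ) * (m+2) + 1 = 4*m + 9 := by ring
  rw [this]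
  nlinarith [hsum6, hdesc]

end AsMean

theorem asLen_mean (n : ℕ) (hn : 2 ≤ n) :
    (∑ w : Equiv.Perm (Fin n), (asLen n w : ℚ)) / n.factorial
      = (4 * n + 1) / 6 ∧
    6 * ∑ w : Equiv.Perm (Fin n), asLen n w = n.factorial * (4 * n + 1) := by
  have key := AsMean.sum_asLen (n := n) hn
  refine ⟨?_, key⟩
  have hfac : ((n.factorial : ℚ)) ≠ 0 := Nat.cast_ne_zero.mpr (Nat.factorial_ne_zero n)
  have h6 : (6:ℚ) * ∑ w : Equiv.Perm (Fin n), (asLen n w : ℚ)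
      = (n.factorial : ℚ) * (4 * n + 1) := by exact_mod_cast key
  rw [div_eq_div_iff hfac (by norm_num : (6:ℚ) ≠ 0)]
  linarith
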